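/- Let H₁ and H₂ be d×d Hermitian matrices and t ∈ ℝ. Then ‖e^{−iH₁t} e^{−iH₂t} − e^{−i(H₁+H₂)t}‖ ≤ (t²/2)·‖[H₁, H₂]‖, where [H₁,H₂] = H₁H₂ − H₂H₁ and ‖·‖ is the operator norm. -/

import Mathlib

open scoped Matrix.Norms.L2Operator

open NormedSpace

namespace TrotterAux

variable {d : ℕ}

local notation "M" => Matrix (Fin d) (Fin d) ℂ

noncomputable instance : ContinuousStar (Matrix (Fin d) (Fin d) ℂ) := by
  refine ⟨(Isometry.continuous ?_)⟩
  intro x y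
  rw [edist_nndist, edist_nndist, nndist_eq_nnnorm, nndist_eq_nnnorm, ← star_sub,
    Matrix.star_eq_conjTranspose, Matrix.l2_opNNNorm_conjTranspose]

noncomputable instance : NormedAlgebra ℚ (Matrix (Fin d) (Fin d) ℂ) :=
  { (inferInstance : Algebra ℚ (Matrix (Fin d) (Fin d) ℂ)) with
    norm_smul_le := fun q x => by
      rw [← algebraMap_smul ℂ q x, norm_smul, norm_algebraMap'] }

lemma norm_exp_skew (A : M) (hA : star A = -A) : ‖exp A‖ ≤ 1 := by
  rcases subsingleton_or_nontrivial M with h | h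
  · simp [Subsingleton.elim (exp A) 0]
  · have hmem : exp A ∈ unitary M :=
      exp_mem_unitary_of_mem_skewAdjoint (skewAdjoint.mem_iff.mpr hA)
    exact le_of_eq (CStarRing.norm_of_mem_unitary hmem)

lemma norm_exp_smul_skew (A : M) (hA : star A = -A) (u : ℝ) :
    ‖exp (u • A)‖ ≤ 1 := by
  refine norm_exp_skew _ ?_
  rw [star_smul, hA, star_trivial, smul_neg]

lemma exp_cont (A : M) : Continuous fun u : ℝ => exp (u • A) :=
  exp_continuous.comp (continuous_id.smul continuous_const)

lemma commute_exp (A : M) (u : ℝ) : A * exp (u • A) = exp (u • A) * A :=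
  ((Commute.refl A).smul_right u).exp_right

/-- Inner commutator bound. -/
lemma inner_bound (A B : M) (hA : star A = -A) {s : ℝ} (hs : 0 ≤ s) :
    ‖exp (s • A) * B - B * exp (s • A)‖ ≤ s * ‖A * B - B * A‖ := by
  set g : ℝ → M := fun u => exp ((s - u) • A) * (B * exp (u • A)) with hg
  set g' : ℝ → M := fun u =>
    exp ((s - u) • A) * ((B * A - A * B) * exp (u • A)) with hg'
  have hderiv : ∀ u : ℝ, HasDerivAt g (g' u) u := by
    intro u
    have h1 : HasDerivAt (fun u : ℝ => exp ((s - u) • A))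
        ((-1 : ℝ) • (exp ((s - u) • A) * A)) u := by
      have := (hasDerivAt_exp_smul_const (𝕂 := ℝ) A (s - u)).scomp u
        ((hasDerivAt_id u).const_sub s)
      exact this
    have h2 : HasDerivAt (fun u : ℝ => B * exp (u • A))
        (B * (exp (u • A) * A)) u :=
      (hasDerivAt_exp_smul_const (𝕂 := ℝ) A u).const_mul B
    have hthis := h1.mul h2
    have heq : (-1 : ℝ) • (exp ((s - u) • A) * A) * (B * exp (u • A)) +
        exp ((s - u) • A) * (B * (exp (u • A) * A)) = g' u := by
      rw [hg']
      simp only [neg_one_smul]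
      rw [← commute_exp A u]
      noncomm_ring
    rw [heq] at hthis
    exact hthis
  have hcont : Continuous g' :=
    ((exp_cont A).comp (continuous_const.sub continuous_id)).mul
      (continuous_const.mul (exp_cont A))
  have hint : IntervalIntegrable g' MeasureTheory.volume 0 s :=
    hcont.intervalIntegrable 0 s
  have hftc : ∫ u in (0:ℝ)..s, g' u = g s - g 0 :=
    intervalIntegral.integral_eq_sub_of_hasDerivAt (fun u _ => hderiv u) hint
  have hgs : g s = B * exp (s • A) := by simp [hg]
  have hg0 : g 0 = exp (s • A) * B := by simp [hg]
  have key : exp (s • A) * B - B * exp (s • A) = -∫ u in (0:ℝ)..s, g' u := by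
    rw [hftc, hgs, hg0]; abel
  rw [key, norm_neg]
  have hbound : ∀ u ∈ Set.uIoc (0:ℝ) s, ‖g' u‖ ≤ ‖A * B - B * A‖ := by
    intro u _
    calc ‖g' u‖ ≤ ‖exp ((s - u) • A)‖ * ‖(B * A - A * B) * exp (u • A)‖ :=
          norm_mul_le _ _
      _ ≤ ‖exp ((s - u) • A)‖ * (‖B * A - A * B‖ * ‖exp (u • A)‖) := by
          gcongr; exact norm_mul_le _ _
      _ ≤ 1 * (‖B * A - A * B‖ * 1) := by
          gcongr
          · exact norm_exp_smul_skew A hA _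
          · exact norm_exp_smul_skew A hA _
      _ = ‖A * B - B * A‖ := by rw [one_mul, mul_one, ← norm_neg]; congr 1; abel
  calc ‖∫ u in (0:ℝ)..s, g' u‖ ≤ ‖A * B - B * A‖ * |s - 0| :=
        intervalIntegral.norm_integral_le_of_norm_le_const hbound
    _ = s * ‖A * B - B * A‖ := by rw [sub_zero, abs_of_nonneg hs, mul_comm]

/-- Core Trotter bound for skew-adjoint matrices and nonnegative time. -/
lemma core (A B : M) (hA : star A = -A) (hB : star B = -B) {t : ℝ} (ht : 0 ≤ t) :
    ‖exp (t • A) * exp (t • B) - exp (t • (A + B))‖ ≤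
      t ^ 2 / 2 * ‖A * B - B * A‖ := by
  have hAB : star (A + B) = -(A + B) := by rw [star_add, hA, hB]; abel
  set f : ℝ → M := fun s => exp ((t - s) • (A + B)) * (exp (s • A) * exp (s • B))
    with hf
  set f' : ℝ → M := fun s =>
    exp ((t - s) • (A + B)) *
      ((exp (s • A) * B - B * exp (s • A)) * exp (s • B)) with hf'
  have hderiv : ∀ s : ℝ, HasDerivAt f (f' s) s := by
    intro s
    have h1 : HasDerivAt (fun s : ℝ => exp ((t - s) • (A + B)))
        ((-1 : ℝ) • (exp ((t - s) • (A + B)) * (A + B))) s := by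
      have := (hasDerivAt_exp_smul_const (𝕂 := ℝ) (A + B) (t - s)).scomp s
        ((hasDerivAt_id s).const_sub t)
      exact this
    have h2 : HasDerivAt (fun s : ℝ => exp (s • A) * exp (s • B))
        ((exp (s • A) * A) * exp (s • B) + exp (s • A) * (exp (s • B) * B)) s :=
      (hasDerivAt_exp_smul_const (𝕂 := ℝ) A s).mul (hasDerivAt_exp_smul_const (𝕂 := ℝ) B s)
    have hthis := h1.mul h2
    have heq : (-1 : ℝ) • (exp ((t - s) • (A + B)) * (A + B)) *
          (exp (s • A) * exp (s • B)) +
        exp ((t - s) • (A + B)) *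
          ((exp (s • A) * A) * exp (s • B) + exp (s • A) * (exp (s • B) * B)) =
        f' s := by
      rw [hf']
      simp only [neg_one_smul]
      rw [← commute_exp A s, ← commute_exp B s]
      noncomm_ring
    rw [heq] at hthis
    exact hthis
  have hcont : Continuous f' :=
    ((exp_cont (A + B)).comp (continuous_const.sub continuous_id)).mul
      ((((exp_cont A).mul continuous_const).sub (continuous_const.mul (exp_cont A))).mul
        (exp_cont B))
  have hint : IntervalIntegrable f' MeasureTheory.volume 0 t :=
    hcont.intervalIntegrable 0 t
  have hftc : ∫ s in (0:ℝ)..t, f' s = f t - f 0 :=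
    intervalIntegral.integral_eq_sub_of_hasDerivAt (fun s _ => hderiv s) hint
  have hft : f t = exp (t • A) * exp (t • B) := by simp [hf]
  have hf0 : f 0 = exp (t • (A + B)) := by simp [hf]
  have key : exp (t • A) * exp (t • B) - exp (t • (A + B)) =
      ∫ s in (0:ℝ)..t, f' s := by rw [hftc, hft, hf0]
  rw [key]
  have hbound : ∀ s ∈ Set.uIoc (0:ℝ) t, ‖f' s‖ ≤ s * ‖A * B - B * A‖ := by
    intro s hsmem
    rw [Set.uIoc_of_le ht] at hsmem
    have hs0 : 0 ≤ s := le_of_lt hsmem.1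
    calc ‖f' s‖ ≤ ‖exp ((t - s) • (A + B))‖ *
          ‖(exp (s • A) * B - B * exp (s • A)) * exp (s • B)‖ := norm_mul_le _ _
      _ ≤ ‖exp ((t - s) • (A + B))‖ *
          (‖exp (s • A) * B - B * exp (s • A)‖ * ‖exp (s • B)‖) := by
          gcongr; exact norm_mul_le _ _
      _ ≤ 1 * ((s * ‖A * B - B * A‖) * 1) := by
          gcongr
          · exact norm_exp_smul_skew _ hAB _
          · exact inner_bound A B hA hs0
          · exact norm_exp_smul_skew _ hB _
      _ = s * ‖A * B - B * A‖ := by ring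
  have habs : |∫ s in (0:ℝ)..t, s * ‖A * B - B * A‖| = t ^ 2 / 2 * ‖A * B - B * A‖ := by
    rw [intervalIntegral.integral_mul_const, integral_id]
    have h0 : ((t:ℝ) ^ 2 - 0 ^ 2) / 2 * ‖A * B - B * A‖ = t ^ 2 / 2 * ‖A * B - B * A‖ := by
      ring
    rw [h0, abs_of_nonneg (by positivity)]
  calc ‖∫ s in (0:ℝ)..t, f' s‖ ≤ |∫ s in (0:ℝ)..t, s * ‖A * B - B * A‖| := by
        refine (intervalIntegral.norm_integral_le_of_norm_le ht ?_ ?_).trans (le_abs_self _)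
        · exact Filter.Eventually.of_forall
            (fun s hs => hbound s (by rw [Set.uIoc_of_le ht]; exact hs))
        · exact (continuous_id.mul continuous_const).intervalIntegrable 0 t
    _ = t ^ 2 / 2 * ‖A * B - B * A‖ := habs

end TrotterAux

/-- first-order Trotter commutator error bound. -/
theorem trotter_commutator_bound {d : ℕ} (H1 H2 : Matrix (Fin d) (Fin d) ℂ)
    (h1 : H1.IsHermitian) (h2 : H2.IsHermitian) (t : ℝ) :
    ‖NormedSpace.exp ((-(Complex.I * t)) • H1) *
        NormedSpace.exp ((-(Complex.I * t)) • H2) -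
      NormedSpace.exp ((-(Complex.I * t)) • (H1 + H2))‖ ≤
      t ^ 2 / 2 * ‖H1 * H2 - H2 * H1‖ := by
  have hexp : (NormedSpace.exp : Matrix (Fin d) (Fin d) ℂ → _) = NormedSpace.exp :=
    rfl
  rcases le_or_gt 0 t with ht | ht
  · set A := (-Complex.I) • H1 with hA
    set B := (-Complex.I) • H2 with hB
    have hsA : star A = -A := by rw [hA, star_smul, Matrix.star_eq_conjTranspose, h1.eq]; simp
    have hsB : star B = -B := by rw [hB, star_smul, Matrix.star_eq_conjTranspose, h2.eq]; simp
    have e1 : (-(Complex.I * t)) • H1 = t • A := by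
      rw [hA, ← Complex.coe_smul, smul_smul]; congr 1; ring
    have e2 : (-(Complex.I * t)) • H2 = t • B := by
      rw [hB, ← Complex.coe_smul, smul_smul]; congr 1; ring
    have e3 : (-(Complex.I * t)) • (H1 + H2) = t • (A + B) := by
      rw [hA, hB, ← smul_add, ← Complex.coe_smul, smul_smul]; congr 1; ring
    have hcomm : ‖A * B - B * A‖ = ‖H1 * H2 - H2 * H1‖ := by
      have h : A * B - B * A = (-1 : ℂ) • (H1 * H2 - H2 * H1) := by
        rw [hA, hB, Matrix.smul_mul, Matrix.mul_smul, Matrix.smul_mul, Matrix.mul_smul,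
          smul_smul, smul_smul, smul_sub]
        norm_num
      rw [h, norm_smul]; simp
    rw [hexp, e1, e2, e3, ← hcomm]
    exact TrotterAux.core A B hsA hsB ht
  · set A := Complex.I • H1 with hA
    set B := Complex.I • H2 with hB
    have hsA : star A = -A := by rw [hA, star_smul, Matrix.star_eq_conjTranspose, h1.eq]; simp
    have hsB : star B = -B := by rw [hB, star_smul, Matrix.star_eq_conjTranspose, h2.eq]; simp
    have e1 : (-(Complex.I * t)) • H1 = (-t) • A := by
      rw [hA, ← Complex.coe_smul, smul_smul]; congr 1; push_cast; ring
    have e2 : (-(Complex.I * t)) • H2 = (-t) • B := by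
      rw [hB, ← Complex.coe_smul, smul_smul]; congr 1; push_cast; ring
    have e3 : (-(Complex.I * t)) • (H1 + H2) = (-t) • (A + B) := by
      rw [hA, hB, ← smul_add, ← Complex.coe_smul, smul_smul]; congr 1; push_cast; ring
    have hcomm : ‖A * B - B * A‖ = ‖H1 * H2 - H2 * H1‖ := by
      have h : A * B - B * A = (-1 : ℂ) • (H1 * H2 - H2 * H1) := by
        rw [hA, hB, Matrix.smul_mul, Matrix.mul_smul, Matrix.smul_mul, Matrix.mul_smul,
          smul_smul, smul_smul, smul_sub]
        norm_num
      rw [h, norm_smul]; simp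
    have ht' : (0:ℝ) ≤ -t := by linarith
    have hcore := TrotterAux.core A B hsA hsB ht'
    rw [hexp, e1, e2, e3, ← hcomm]
    calc _ ≤ (-t) ^ 2 / 2 * ‖A * B - B * A‖ := hcore
      _ = t ^ 2 / 2 * ‖A * B - B * A‖ := by ring_nf
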